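/- Let d ≥ 2 and R ∈ ℕ₊, and let G be a digraph with maxdeg(G) ≤ d. Then there exists a 3R-sparse partition π of V(G) with |π| ≤ d^{6R}. -/

import Mathlib

open MeasureTheory
open scoped Classical ENNReal

namespace MTLLL

variable {V : Type*} {ι : Type*}

/-- The out-neighbourhood `Var(x)` of a vertex `x` in the digraph with edge relation `E`. -/
def Var (E : V → V → Prop) (x : V) : Set V := {y | E x y}

/-- The in-neighbourhood `Cl(x)`. -/
def Cl (E : V → V → Prop) (x : V) : Set V := {y | E y x}

/-- The neighbourhood `N(x) = Var(x) ∪ Cl(x)`. -/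
def Nbr (E : V → V → Prop) (x : V) : Set V := Var E x ∪ Cl E x

/-- The maximal vertex degree of a digraph, as an extended natural number. -/
noncomputable def maxdeg (E : V → V → Prop) : ℕ∞ := ⨆ x : V, (Nbr E x).encard

/-- The digraph `Rel(G)`: edges join vertices whose out-neighbourhoods intersect. -/
def Rel (E : V → V → Prop) (x y : V) : Prop := (Var E x ∩ Var E y).Nonempty

/-- A set is independent in a digraph if no edge other than a self-loop joins two of its
elements. -/
def Indep (E : V → V → Prop) (I : Set V) : Prop :=
  ∀ x ∈ I, ∀ y ∈ I, x ≠ y → ¬ E x y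

/-- `I` is a maximal independent subset of `X`. -/
def MaxIndepIn (E : V → V → Prop) (X I : Set V) : Prop :=
  I ⊆ X ∧ Indep E I ∧ ∀ J : Set V, I ⊆ J → J ⊆ X → Indep E J → J = I

/-- A local rule: for each vertex `x` a set of colourings of `Var(x)` by `b` colours,
imposing no restriction when `Var(x)` is empty. -/
structure LocalRule (E : V → V → Prop) (b : ℕ) where
  R : ∀ x : V, Set (Var E x → Fin b)
  isFull_of_empty : ∀ x : V, Var E x = ∅ → R x = Set.univ

/-- The complement rule `𝐑ᶜ(x)`. -/
def LocalRule.Rc {E : V → V → Prop} {b : ℕ} (R : LocalRule E b) (x : V) :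
    Set (Var E x → Fin b) := (R.R x)ᶜ

/-- A colouring satisfies the rule if at every vertex its restriction to `Var(x)` obeys
`𝐑(x)`. -/
def Satisfies (E : V → V → Prop) {b : ℕ} (R : LocalRule E b) (f : V → Fin b) : Prop :=
  ∀ x : V, (fun y : Var E x => f y.1) ∈ R.R x

/-- The bad set `B(f)` of clauses violated by `f`. -/
def bad (E : V → V → Prop) {b : ℕ} (R : LocalRule E b) (f : V → Fin b) : Set V :=
  {x : V | (fun y : Var E x => f y.1) ∈ R.Rc x}

/-- The symmetrisation of the digraph, with loops removed, as a simple graph;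
it is used to measure graph distances. -/
def toSG (E : V → V → Prop) : SimpleGraph V where
  Adj x y := x ≠ y ∧ (E x y ∨ E y x)
  symm := ⟨fun x y h => ⟨Ne.symm h.1, h.2.symm⟩⟩
  loopless := ⟨fun x h => h.1 rfl⟩

/-- The ball of radius `r` around `x` in graph distance (ignoring orientations). -/
def ball (E : V → V → Prop) (x : V) (r : ℕ) : Set V :=
  {y | ∃ p : (toSG E).Walk x y, p.length ≤ r}

/-- The class `subexp(R,ε,d)`: max degree at most `d` and balls of radius `3R` of size at
most `(1+ε)^R`. -/
def Subexp (E : V → V → Prop) (Rad d : ℕ) (ε : ℝ) : Prop :=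
  maxdeg E ≤ (d : ℕ∞) ∧
  ∀ x : V, (ball E x (3 * Rad)).Finite ∧ ((ball E x (3 * Rad)).ncard : ℝ) ≤ (1 + ε) ^ Rad

/-- A partition (encoded by the map sending a vertex to its part) is `r`-sparse if distinct
vertices in the same part are at graph distance greater than `2r`. -/
def Sparse (E : V → V → Prop) (part : V → ι) (r : ℕ) : Prop :=
  ∀ x y : V, part x = part y → x ≠ y → y ∉ ball E x (2 * r)

/-- An independence function: `I X` is always a maximal independent subset of `X`. -/
def IndepFun (E : V → V → Prop) (I : Set V → Set V) : Prop :=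
  ∀ X : Set V, MaxIndepIn E X (I X)

/-- `Var` of a set of vertices. -/
def VarSet (E : V → V → Prop) (A : Set V) : Set V := ⋃ x ∈ A, Var E x

/-- One run of the Moser–Tardos algorithm: `(mtAux j).1 = MT^j` and `(mtAux j).2 = h^{j+1}`. -/
noncomputable def mtAux (E : V → V → Prop) {b : ℕ} (R : LocalRule E b)
    (part : V → ι) (I : Set V → Set V) (rnd : ι × ℕ → Fin b) :
    ℕ → (V → Fin b) × (V → ℕ)
  | 0 => (fun x => rnd (part x, 0), fun _ => 1)
  | j + 1 =>
    let p := mtAux E R part I rnd j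
    (fun x => if x ∈ VarSet E (I (bad E R p.1)) then rnd (part x, p.2 x) else p.1 x,
     fun x => if x ∈ VarSet E (I (bad E R p.1)) then p.2 x + 1 else p.2 x)

/-- The colouring `MT^j` produced by the Moser–Tardos algorithm. -/
noncomputable def MT (E : V → V → Prop) {b : ℕ} (R : LocalRule E b)
    (part : V → ι) (I : Set V → Set V) (rnd : ι × ℕ → Fin b) (j : ℕ) : V → Fin b :=
  (mtAux E R part I rnd j).1

/-- The resampling counters `h^k`. -/
noncomputable def hres (E : V → V → Prop) {b : ℕ} (R : LocalRule E b)
    (part : V → ι) (I : Set V → Set V) (rnd : ι × ℕ → Fin b) : ℕ → V → ℕ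
  | 0 => fun _ => 0
  | j + 1 => (mtAux E R part I rnd j).2

/-- The total number `h^∞(x)` of resamplings at `x`. -/
noncomputable def hinf (E : V → V → Prop) {b : ℕ} (R : LocalRule E b)
    (part : V → ι) (I : Set V → Set V) (rnd : ι × ℕ → Fin b) (x : V) : ℕ∞ :=
  ⨆ k : ℕ, (hres E R part I rnd k x : ℕ∞)

/-- `μ` is the product over `ι × ℕ` of uniform measures on `Fin b`: it is a probability
measure giving each cylinder set its natural measure. -/
def IsUnifProduct {ι : Type*} (b : ℕ) (μ : Measure ((ι × ℕ) → Fin b)) : Prop :=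
  IsProbabilityMeasure μ ∧
  ∀ (s : Finset (ι × ℕ)) (g : (ι × ℕ) → Fin b),
    μ {rnd | ∀ p ∈ s, rnd p = g p} = (1 / (b : ℝ≥0∞)) ^ s.card

end MTLLL

namespace SparseAux
open MTLLL

variable {V : Type*} (E : V → V → Prop)

lemma mem_ball_self (x : V) (r : ℕ) : x ∈ ball E x r :=
  ⟨SimpleGraph.Walk.nil, by simp⟩

lemma ball_mono {r s : ℕ} (h : r ≤ s) (x : V) : ball E x r ⊆ ball E x s :=
  fun _ ⟨p, hp⟩ => ⟨p, hp.trans h⟩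

lemma ball_zero (x : V) : ball E x 0 = {x} := by
  ext y
  constructor
  · rintro ⟨p, hp⟩
    exact (SimpleGraph.Walk.eq_of_length_eq_zero (Nat.le_zero.mp hp)).symm
  · rintro rfl
    exact mem_ball_self E _ 0

lemma ball_symm {x y : V} {r : ℕ} (h : y ∈ ball E x r) : x ∈ ball E y r := by
  obtain ⟨p, hp⟩ := h
  exact ⟨p.reverse, by rwa [SimpleGraph.Walk.length_reverse]⟩

lemma adj_ball {x z y : V} {r : ℕ} (hz : z ∈ ball E x r) (h : (toSG E).Adj z y) :
    y ∈ ball E x (r + 1) := by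
  obtain ⟨p, hp⟩ := hz
  exact ⟨p.concat h, by rw [SimpleGraph.Walk.length_concat]; omega⟩

lemma ball_succ {x y : V} {r : ℕ} (hy : y ∈ ball E x (r + 1)) :
    y ∈ ball E x r ∨ ∃ z ∈ ball E x r, (toSG E).Adj z y := by
  obtain ⟨p, hp⟩ := hy
  have hq : p.reverse.length ≤ r + 1 := by
    rw [SimpleGraph.Walk.length_reverse]; exact hp
  generalize p.reverse = q at hq
  cases q with
  | nil => exact Or.inl (mem_ball_self E x r)
  | cons h q' =>
    refine Or.inr ⟨_, ⟨q'.reverse, ?_⟩, h.symm⟩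
    rw [SimpleGraph.Walk.length_reverse]
    simp only [SimpleGraph.Walk.length_cons] at hq
    omega

lemma adj_mem_Nbr {z y : V} (h : (toSG E).Adj z y) : y ∈ Nbr E z :=
  (show z ≠ y ∧ (E z y ∨ E y z) from h).2.elim (fun h1 => Or.inl h1) (fun h2 => Or.inr h2)

lemma encard_biUnion_le {α β : Type*} {f : α → Set β} {m : ℕ∞} {S : Set α} (hS : S.Finite)
    (hf : ∀ z ∈ S, (f z).encard ≤ m) : (⋃ z ∈ S, f z).encard ≤ S.encard * m := by
  revert hf
  refine Set.Finite.induction_on (motive := fun S _ =>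
    (∀ z ∈ S, (f z).encard ≤ m) → (⋃ z ∈ S, f z).encard ≤ S.encard * m) S hS (by simp) ?_
  intro a S' ha hS' ih hf
  rw [Set.biUnion_insert]
  calc ((f a) ∪ ⋃ z ∈ S', f z).encard ≤ (f a).encard + (⋃ z ∈ S', f z).encard :=
        Set.encard_union_le _ _
    _ ≤ m + S'.encard * m :=
        add_le_add (hf a (Set.mem_insert _ _)) (ih fun z hz => hf z (Set.mem_insert_of_mem _ hz))
    _ = (S'.encard + 1) * m := by ring
    _ = (insert a S').encard * m := by rw [Set.encard_insert_of_notMem ha]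


/-- Bound on sphere sizes: `gfun d 0 = 1`, `gfun d (r+1) = d*(d-1)^r`. -/
def gfun (d : ℕ) : ℕ → ℕ
  | 0 => 1
  | (r+1) => d * (d-1)^r

lemma ball_encard_le {d : ℕ} (hd : 2 ≤ d) (hdeg : maxdeg E ≤ (d : ℕ∞)) (x : V) (k : ℕ) :
    (ball E x k).encard ≤ ((∑ i ∈ Finset.range (k+1), gfun d i : ℕ) : ℕ∞) := by
  have hNbr : ∀ z : V, (Nbr E z).encard ≤ (d : ℕ∞) := fun z =>
    le_trans (le_iSup (fun x => (Nbr E x).encard) z) hdeg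
  set sph : ℕ → Set V := fun r =>
    Nat.rec ({x} : Set V) (fun m _ => ball E x (m+1) \ ball E x m) r with hsph
  have key : ∀ r : ℕ, (sph r).encard ≤ (gfun d r : ℕ∞) ∧
      (ball E x r).encard ≤ ((∑ i ∈ Finset.range (r+1), gfun d i : ℕ) : ℕ∞) := by
    intro r
    induction r with
    | zero =>
      constructor
      · simp [hsph, gfun]
      · rw [ball_zero]; simp [gfun]
    | succ r ih =>
      obtain ⟨ihs, ihb⟩ := ih
      have hsfin : (sph r).Finite := by
        rw [← Set.encard_lt_top_iff]
        exact lt_of_le_of_lt ihs (WithTop.coe_lt_top _)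
      -- membership in the sphere at level r for predecessors
      have hzsph : ∀ y : V, y ∈ sph (r+1) → ∃ z ∈ sph r, (toSG E).Adj z y := by
        intro y hy
        have hy1 : y ∈ ball E x (r+1) := hy.1
        have hy2 : y ∉ ball E x r := hy.2
        rcases ball_succ E hy1 with h | ⟨z, hz, hadj⟩
        · exact absurd h hy2
        · refine ⟨z, ?_, hadj⟩
          cases r with
          | zero =>
            rw [ball_zero] at hz
            exact hz
          | succ m =>
            refine ⟨hz, fun hzm => hy2 ?_⟩
            exact adj_ball E hzm hadj
      -- the per-vertex bound
      set mr : ℕ := Nat.rec d (fun _ _ => d - 1) r with hmr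
      have hAz : ∀ z ∈ sph r, ({y | (toSG E).Adj z y} ∩ sph (r+1)).encard ≤ (mr : ℕ∞) := by
        intro z hz
        cases r with
        | zero =>
          refine le_trans (Set.encard_le_encard ?_) (hNbr z)
          intro y hy
          exact adj_mem_Nbr E hy.1
        | succ m =>
          have hz1 : z ∈ ball E x (m+1) := hz.1
          have hz2 : z ∉ ball E x m := hz.2
          rcases ball_succ E hz1 with h | ⟨w, hw, hadj⟩
          · exact absurd h hz2
          · have hwz : w ∈ Nbr E z := adj_mem_Nbr E hadj.symm
            have hsub : {y | (toSG E).Adj z y} ∩ sph (m+2) ⊆ Nbr E z \ {w} := by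
              rintro y ⟨hy1, hy2⟩
              refine ⟨adj_mem_Nbr E hy1, fun hyw => ?_⟩
              have : y ∈ ball E x (m+1) := ball_mono E (Nat.le_succ m) x (hyw ▸ hw)
              exact hy2.2 this
            refine le_trans (Set.encard_le_encard hsub) ?_
            have h1 : (Nbr E z \ {w}).encard + 1 = (Nbr E z).encard :=
              Set.encard_diff_singleton_add_one hwz
            have h2 : (Nbr E z \ {w}).encard + 1 ≤ ((d - 1 : ℕ) : ℕ∞) + 1 := by
              rw [h1]
              refine le_trans (hNbr z) (le_of_eq ?_)
              have : (d - 1) + 1 = d := by omega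
              rw [← this]
              push_cast
              ring
            exact (ENat.add_le_add_iff_right ENat.one_ne_top).mp h2
      -- covering
      have hcover : sph (r+1) ⊆ ⋃ z ∈ sph r, ({y | (toSG E).Adj z y} ∩ sph (r+1)) := by
        intro y hy
        obtain ⟨z, hz, hadj⟩ := hzsph y hy
        exact Set.mem_biUnion hz ⟨hadj, hy⟩
      have hs1 : (sph (r+1)).encard ≤ (gfun d (r+1) : ℕ∞) := by
        refine le_trans (Set.encard_le_encard hcover) ?_
        refine le_trans (encard_biUnion_le hsfin hAz) ?_
        refine le_trans (mul_le_mul' ihs le_rfl) ?_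
        have : gfun d r * mr = gfun d (r+1) := by
          cases r with
          | zero => simp [gfun, hmr]
          | succ m => simp only [gfun, hmr]; ring
        refine le_of_eq ?_
        rw [← this]
        push_cast
        ring
      refine ⟨hs1, ?_⟩
      have hb : ball E x (r+1) ⊆ ball E x r ∪ sph (r+1) := by
        intro y hy
        by_cases h : y ∈ ball E x r
        · exact Or.inl h
        · exact Or.inr ⟨hy, h⟩
      refine le_trans (Set.encard_le_encard hb) ?_
      refine le_trans (Set.encard_union_le _ _) ?_
      refine le_trans (add_le_add ihb hs1) (le_of_eq ?_)
      push_cast [Finset.sum_range_succ]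
      ring
  exact (key k).2

lemma sum_gfun_le {d k : ℕ} (hd : 2 ≤ d) (hk : 6 ≤ k) :
    ∑ i ∈ Finset.range (k+1), gfun d i ≤ d ^ k := by
  induction k, hk using Nat.le_induction with
  | base =>
    obtain ⟨e, rfl⟩ : ∃ e, d = e + 2 := ⟨d - 2, by omega⟩
    simp only [Finset.sum_range_succ, Finset.sum_range_zero, gfun]
    have h2 : e + 2 - 1 = e + 1 := by omega
    rw [h2]
    ring_nf
    nlinarith [Nat.zero_le (e^2), Nat.zero_le (e^3), Nat.zero_le (e^4), Nat.zero_le (e^5), Nat.zero_le (e^6), Nat.zero_le e]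
  | succ k hk ih =>
    rw [Finset.sum_range_succ]
    have hgk : gfun d (k+1) = d * (d-1)^k := rfl
    obtain ⟨m, rfl⟩ : ∃ m, k = m + 1 := ⟨k - 1, by omega⟩
    have h1 : (d-1)^(m+1) ≤ (d-1) * d^m := by
      rw [pow_succ']
      exact Nat.mul_le_mul_left _ (Nat.pow_le_pow_left (Nat.sub_le d 1) m)
    have h2 : d * (d-1)^(m+1) ≤ (d-1) * d^(m+1) := by
      calc d * (d-1)^(m+1) ≤ d * ((d-1) * d^m) := Nat.mul_le_mul_left _ h1
        _ = (d-1) * d^(m+1) := by ring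
    calc ∑ i ∈ Finset.range (m+2), gfun d i + gfun d (m+2)
        ≤ d^(m+1) + d * (d-1)^(m+1) := add_le_add ih (le_of_eq rfl)
      _ ≤ d^(m+1) + (d-1) * d^(m+1) := Nat.add_le_add_left h2 _
      _ = (1 + (d-1)) * d^(m+1) := by ring
      _ = d^(m+2) := by
          have : 1 + (d-1) = d := by omega
          rw [this]
          ring

lemma greedy_coloring {V : Type*} [Nonempty V] (H : SimpleGraph V) (n : ℕ)
    (hn : ∀ x : V, (H.neighborSet x).Finite ∧ (H.neighborSet x).ncard < n) :
    ∃ c : V → Fin n, ∀ x y : V, H.Adj x y → c x ≠ c y := by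
  have hn0 : 0 < n := lt_of_le_of_lt (Nat.zero_le _) (hn (Classical.arbitrary V)).2
  have wf : WellFounded (@WellOrderingRel V) := IsWellFounded.wf
  have hex : ∀ (x : V) (ih : ∀ y : V, WellOrderingRel y x → Fin n), ∃ c : Fin n,
      ∀ y (h : WellOrderingRel y x), H.Adj x y → ih y h ≠ c := by
    intro x ih
    set g : V → Fin n := fun y => if h : WellOrderingRel y x then ih y h else ⟨0, hn0⟩ with hg
    have hcard : (g '' H.neighborSet x).ncard < n :=
      lt_of_le_of_lt (Set.ncard_image_le (hn x).1) (hn x).2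
    have hne : g '' H.neighborSet x ≠ Set.univ := by
      intro he
      rw [he, Set.ncard_univ] at hcard
      simp at hcard
    obtain ⟨c, hc⟩ := Set.ne_univ_iff_exists_notMem _ |>.mp hne
    refine ⟨c, fun y h hadj heq => hc ?_⟩
    refine ⟨y, hadj, ?_⟩
    rw [hg]
    simp only [h, dif_pos]
    exact heq
  choose F hF using hex
  set c : V → Fin n := wf.fix F with hcdef
  have hfix : ∀ x, c x = F x (fun y _ => c y) := fun x => wf.fix_eq F x
  have key : ∀ x y : V, WellOrderingRel y x → H.Adj x y → c y ≠ c x := by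
    intro x y h hadj
    have := hF x (fun y _ => c y) y h hadj
    rw [hfix x]
    exact this
  refine ⟨c, fun x y hadj => ?_⟩
  rcases trichotomous_of WellOrderingRel x y with h | h | h
  · exact key y x h hadj.symm
  · exact absurd h hadj.ne
  · exact (key x y h hadj).symm

end SparseAux

open SparseAux
open MTLLL in
/-- Remark 2.4(a): a digraph of maximal degree at most `d` admits a `3R`-sparse partition
with at most `d^{6R}` parts. -/
theorem exists_sparse_partition_card_le
    {V : Type*} [Nonempty V] (E : V → V → Prop) (d Rad : ℕ) (hd : 2 ≤ d) (hRad : 0 < Rad)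
    (hdeg : maxdeg E ≤ (d : ℕ∞)) :
    ∃ (n : ℕ) (part : V → Fin n), n ≤ d ^ (6 * Rad) ∧ Sparse E part (3 * Rad) := by
  set k := 6 * Rad with hk
  have hk6 : 6 ≤ k := by omega
  set H : SimpleGraph V :=
    { Adj := fun a b => a ≠ b ∧ b ∈ ball E a k
      symm := ⟨fun a b h => ⟨h.1.symm, ball_symm E h.2⟩⟩
      loopless := ⟨fun a h => h.1 rfl⟩ } with hH
  have hball : ∀ a : V, (ball E a k).encard ≤ ((d ^ k : ℕ) : ℕ∞) := fun a =>
    le_trans (ball_encard_le E hd hdeg a k) (by exact_mod_cast sum_gfun_le hd hk6)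
  have hnbr : ∀ a : V, (H.neighborSet a).Finite ∧ (H.neighborSet a).ncard < d ^ k := by
    intro a
    have hbfin : (ball E a k).Finite := by
      rw [← Set.encard_lt_top_iff]
      exact lt_of_le_of_lt (hball a) (WithTop.coe_lt_top _)
    have hsub : H.neighborSet a ⊆ ball E a k := fun b hb => hb.2
    have hfin : (H.neighborSet a).Finite := hbfin.subset hsub
    refine ⟨hfin, ?_⟩
    have hlt : (H.neighborSet a).ncard < (ball E a k).ncard := by
      refine Set.ncard_lt_ncard ?_ hbfin
      refine ⟨hsub, fun hsub2 => ?_⟩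
      have : a ∈ H.neighborSet a := hsub2 (mem_ball_self E a k)
      exact this.1 rfl
    refine lt_of_lt_of_le hlt ?_
    have := hball a
    rw [← hbfin.cast_ncard_eq] at this
    exact_mod_cast this
  obtain ⟨c, hc⟩ := greedy_coloring H (d ^ k) hnbr
  refine ⟨d ^ k, c, le_rfl, ?_⟩
  intro x y hpart hne hyball
  have h63 : 2 * (3 * Rad) = k := by omega
  rw [h63] at hyball
  exact hc x y ⟨hne, hyball⟩ hpart
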